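/- Let n and k be positive integers with k > n/2, and let G be a subgroup of the symmetric group S_n on {1, …, n} whose action on {1, …, n} is transitive. Suppose there exists a subset s ⊆ {1, …, n} of cardinality k such that every permutation of {1, …, n} that fixes each point outside s belongs to G (i.e., G contains a subgroup isomorphic as a permutation group to S_k acting on s and trivially on its complement). Then G = S_n. -/
import Mathlib

theorem stmt_4 (n k : ℕ) (hn : 0 < n) (hk : 0 < k) (hkn : n < 2 * k)
    (G : Subgroup (Equiv.Perm (Fin n)))
    (htrans : ∀ i j : Fin n, ∃ σ ∈ G, σ i = j)
    (s : Finset (Fin n)) (hs : s.card = k)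
    (hsub : ∀ σ : Equiv.Perm (Fin n), (∀ i : Fin n, i ∉ s → σ i = i) → σ ∈ G) :
    G = ⊤ := by
  obtain ⟨a, ha⟩ : s.Nonempty := Finset.card_pos.mp (hs ▸ hk)
  -- swaps within s are in G
  have hswap_s : ∀ x ∈ s, ∀ z ∈ s, Equiv.swap x z ∈ G := by
    intro x hx z hz
    apply hsub
    intro i hi
    exact Equiv.swap_apply_of_ne_of_ne (fun h => hi (h ▸ hx)) (fun h => hi (h ▸ hz))
  -- for every x, swap x z ∈ G for all z ∈ s
  have key : ∀ x : Fin n, ∀ z ∈ s, Equiv.swap x z ∈ G := by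
    intro x z hz
    obtain ⟨g, hg, hga⟩ := htrans a x
    set t : Finset (Fin n) := s.image g with ht
    have htG : ∀ σ : Equiv.Perm (Fin n), (∀ i : Fin n, i ∉ t → σ i = i) → σ ∈ G := by
      intro σ hσ
      have : g⁻¹ * σ * g ∈ G := by
        apply hsub
        intro i hi
        have : g i ∉ t := by
          intro h
          obtain ⟨j, hj, hji⟩ := Finset.mem_image.mp h
          exact hi (g.injective hji ▸ hj)
        simp [hσ _ this]
      have := G.mul_mem (G.mul_mem hg this) (G.inv_mem hg)
      simpa [mul_assoc] using this
    have hxt : x ∈ t := Finset.mem_image.mpr ⟨a, ha, hga⟩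
    have hzt : s ∩ t |>.Nonempty := by
      rw [← Finset.card_pos]
      have hcard : t.card = k := by rw [ht, Finset.card_image_of_injective _ g.injective, hs]
      have hu : (s ∪ t).card ≤ n := le_trans (Finset.card_le_card (Finset.subset_univ _))
        (by simp)
      have := Finset.card_union_add_card_inter s t
      omega
    obtain ⟨y, hy⟩ := hzt
    have hys : y ∈ s := (Finset.mem_inter.mp hy).1
    have hyt : y ∈ t := (Finset.mem_inter.mp hy).2
    have hxyG : Equiv.swap x y ∈ G := by
      apply htG
      intro i hi
      exact Equiv.swap_apply_of_ne_of_ne (fun h => hi (h ▸ hxt)) (fun h => hi (h ▸ hyt))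
    have hyzG : Equiv.swap y z ∈ G := hswap_s y hys z hz
    by_cases hxy : x = y
    · exact hxy ▸ hyzG
    by_cases hyz : y = z
    · exact hyz ▸ hxyG
    by_cases hxz : x = z
    · rw [hxz, Equiv.swap_self, ← Equiv.Perm.one_def]; exact G.one_mem
    have : Equiv.swap x z = Equiv.swap x y * Equiv.swap y z * Equiv.swap x y := by
      conv_lhs => rw [show x = (Equiv.swap x y) y from (Equiv.swap_apply_right x y).symm,
        show z = (Equiv.swap x y) z from
          (Equiv.swap_apply_of_ne_of_ne (Ne.symm hxz) (fun h => hyz h.symm)).symm]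
      rw [Equiv.swap_apply_apply, Equiv.swap_inv]
    rw [this]
    exact G.mul_mem (G.mul_mem hxyG hyzG) hxyG
  -- all swaps in G
  have hall : ∀ x y : Fin n, Equiv.swap x y ∈ G := by
    intro x y
    by_cases hxy : x = y
    · rw [hxy, Equiv.swap_self, ← Equiv.Perm.one_def]; exact G.one_mem
    by_cases hxa : x = a
    · rw [hxa, Equiv.swap_comm]; exact key y a ha
    by_cases hya : y = a
    · rw [hya]; exact key x a ha
    have h1 := key x a ha
    have h2 := key y a ha
    rw [Equiv.swap_comm y a] at h2
    have : Equiv.swap x y = Equiv.swap x a * Equiv.swap a y * Equiv.swap x a := by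
      conv_lhs => rw [show x = (Equiv.swap x a) a from (Equiv.swap_apply_right x a).symm,
        show y = (Equiv.swap x a) y from
          (Equiv.swap_apply_of_ne_of_ne (fun h => hxy h.symm) hya).symm]
      rw [Equiv.swap_apply_apply, Equiv.swap_inv]
    rw [this]
    exact G.mul_mem (G.mul_mem h1 h2) h1
  rw [eq_top_iff, ← Equiv.Perm.closure_isSwap, Subgroup.closure_le]
  rintro σ ⟨x, y, -, rfl⟩
  exact hall x y
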